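/- Let n ≥ 16 and let D be an S_{2,1}-free oriented graph on n vertices with at least ⌊(n+1)²/4⌋ arcs. Then: (a) every vertex of D has at most one in-neighbor whose in-degree is at least 2; and (b) the set X = {v ∈ V(D) : d⁻(v) ≤ 1} satisfies n/2 − √(n/2) < |X| < n/2 + √(n/2) (as real numbers). -/

import Mathlib

/-- An oriented graph on `V`: an arc relation in which no two vertices are
joined by arcs in both directions (in particular it is irreflexive). -/
def IsOriented {V : Type*} (A : V → V → Prop) : Prop :=
  ∀ u v : V, A u v → ¬ A v u

/-- The in-degree of `v`: the number of in-neighbours of `v`. -/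
noncomputable def inDeg {V : Type*} (A : V → V → Prop) (v : V) : ℕ :=
  {u : V | A u v}.ncard

/-- The number of arcs of the digraph. -/
noncomputable def arcCount {V : Type*} (A : V → V → Prop) : ℕ :=
  {p : V × V | A p.1 p.2}.ncard

/-- A copy of `S_{k,1}` (the 1-subdivision of the in-star of order `k+1`)
centered at `v`: pairwise distinct vertices `v, u 0, …, u (k-1), w 0, …, w (k-1)`
with arcs `w i → u i` and `u i → v`. -/
def HasSCopyAt {V : Type*} (A : V → V → Prop) (k : ℕ) (v : V) : Prop :=
  ∃ u w : Fin k → V,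
    Function.Injective u ∧ Function.Injective w ∧
    (∀ i j : Fin k, u i ≠ w j) ∧
    (∀ i : Fin k, u i ≠ v) ∧ (∀ i : Fin k, w i ≠ v) ∧
    (∀ i : Fin k, A (w i) (u i)) ∧ (∀ i : Fin k, A (u i) v)

/-- `A` is `S_{k,1}`-free: no copy of `S_{k,1}` with any center. -/
def SFree {V : Type*} (A : V → V → Prop) (k : ℕ) : Prop :=
  ∀ v : V, ¬ HasSCopyAt A k v

lemma my_irrefl {V : Type*} {A : V → V → Prop} (hori : IsOriented A) (v : V) : ¬ A v v :=
  fun h => hori v v h h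

lemma copy_of {V : Type*} {A : V → V → Prop} (hori : IsOriented A)
    {v u₁ u₂ w₁ w₂ : V} (hu : u₁ ≠ u₂) (hw : w₁ ≠ w₂)
    (h12 : u₁ ≠ w₂) (h21 : u₂ ≠ w₁)
    (a1 : A w₁ u₁) (a2 : A w₂ u₂) (b1 : A u₁ v) (b2 : A u₂ v) :
    HasSCopyAt A 2 v := by
  have h11 : u₁ ≠ w₁ := fun h => my_irrefl hori u₁ (h ▸ a1)
  have h22 : u₂ ≠ w₂ := fun h => my_irrefl hori u₂ (h ▸ a2)
  have hu1v : u₁ ≠ v := fun h => my_irrefl hori v (h ▸ b1)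
  have hu2v : u₂ ≠ v := fun h => my_irrefl hori v (h ▸ b2)
  have hw1v : w₁ ≠ v := fun h => hori u₁ v b1 (h ▸ a1)
  have hw2v : w₂ ≠ v := fun h => hori u₂ v b2 (h ▸ a2)
  refine ⟨![u₁, u₂], ![w₁, w₂], ?_, ?_, ?_, ?_, ?_, ?_, ?_⟩
  · intro i j hij; fin_cases i <;> fin_cases j <;> simp_all
  · intro i j hij; fin_cases i <;> fin_cases j <;> simp_all
  · intro i j; fin_cases i <;> fin_cases j <;> simp_all
  · intro i; fin_cases i <;> simp_all
  · intro i; fin_cases i <;> simp_all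
  · intro i; fin_cases i <;> simp_all
  · intro i; fin_cases i <;> simp_all

lemma part_a {V : Type*} [Fintype V] {A : V → V → Prop}
    (hori : IsOriented A) (hfree : SFree A 2) (v : V) :
    {u : V | A u v ∧ 2 ≤ inDeg A u}.ncard ≤ 1 := by
  by_contra h
  push_neg at h
  obtain ⟨u₁, hu₁, u₂, hu₂, hne⟩ := (Set.one_lt_ncard (Set.toFinite _)).mp h
  obtain ⟨hA1, hd1⟩ := hu₁
  obtain ⟨hA2, hd2⟩ := hu₂
  have hpick : ∀ a b : V, 2 ≤ inDeg A a → ∃ w, A w a ∧ w ≠ b := by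
    intro a b hd
    obtain ⟨c, hc, d, hd', hcd⟩ := (Set.one_lt_ncard (Set.toFinite _)).mp hd
    rcases eq_or_ne c b with rfl | h
    · exact ⟨d, hd', fun h' => hcd h'.symm⟩
    · exact ⟨c, hc, h⟩
  obtain ⟨w₁, hw₁, hw₁u₂⟩ := hpick u₁ u₂ hd1
  obtain ⟨w₂, hw₂, hw₂u₁⟩ := hpick u₂ u₁ hd2
  by_cases hP : ∃ a b : V, (A a u₁ ∧ a ≠ u₂) ∧ (A b u₂ ∧ b ≠ u₁) ∧ a ≠ b
  · obtain ⟨a, b, ⟨ha, hau⟩, ⟨hb, hbu⟩, hab⟩ := hP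
    exact hfree v (copy_of hori hne hab (Ne.symm hbu) (Ne.symm hau) ha hb hA1 hA2)
  · push_neg at hP
    have hww : w₁ = w₂ := hP w₁ w₂ ⟨hw₁, hw₁u₂⟩ ⟨hw₂, hw₂u₁⟩
    have h21 : A u₂ u₁ := by
      by_contra hc
      have hsub : {u : V | A u u₁} ⊆ {w₁} := by
        intro z hz
        have hz2 : z ≠ u₂ := fun h => hc (h ▸ hz)
        have := hP z w₂ ⟨hz, hz2⟩ ⟨hw₂, hw₂u₁⟩
        simp [this, hww]
      have := Set.ncard_le_ncard hsub (Set.finite_singleton _)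
      rw [Set.ncard_singleton] at this
      rw [inDeg] at hd1; omega
    have h12 : A u₁ u₂ := by
      by_contra hc
      have hsub : {u : V | A u u₂} ⊆ {w₂} := by
        intro z hz
        have hz2 : z ≠ u₁ := fun h => hc (h ▸ hz)
        have := hP w₁ z ⟨hw₁, hw₁u₂⟩ ⟨hz, hz2⟩
        simp [← this, hww]
      have := Set.ncard_le_ncard hsub (Set.finite_singleton _)
      rw [Set.ncard_singleton] at this
      rw [inDeg] at hd2; omega
    exact hori u₁ u₂ h12 h21

lemma arc_sum {V : Type*} [Fintype V] (A : V → V → Prop) :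
    arcCount A = ∑ v : V, inDeg A v := by
  classical
  rw [arcCount, Set.ncard_eq_toFinset_card']
  rw [Finset.card_eq_sum_card_fiberwise (f := Prod.snd) (t := Finset.univ)
    (fun x _ => Finset.mem_univ _)]
  refine Finset.sum_congr rfl fun v _ => ?_
  rw [inDeg, Set.ncard_eq_toFinset_card']
  apply Finset.card_bij (fun p _ => p.1)
  · intro p hp
    simp only [Finset.mem_filter, Set.mem_toFinset, Set.mem_setOf_eq] at hp ⊢
    rw [← hp.2]; exact hp.1
  · intro p hp q hq h
    simp only [Finset.mem_filter, Set.mem_toFinset] at hp hq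
    exact Prod.ext h (hp.2.trans hq.2.symm)
  · intro u hu
    simp only [Set.mem_toFinset, Set.mem_setOf_eq] at hu
    exact ⟨(u, v), by simp [hu], rfl⟩

lemma indeg_split {V : Type*} [Fintype V] (A : V → V → Prop) (v : V) :
    inDeg A v = ({u : V | A u v} ∩ {u : V | inDeg A u ≤ 1}).ncard
      + {u : V | A u v ∧ 2 ≤ inDeg A u}.ncard := by
  classical
  have hdecomp : {u : V | A u v} =
      ({u : V | A u v} ∩ {u : V | inDeg A u ≤ 1}) ∪ {u : V | A u v ∧ 2 ≤ inDeg A u} := by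
    ext u
    simp only [Set.mem_union, Set.mem_inter_iff, Set.mem_setOf_eq]
    constructor
    · intro h; by_cases hd : inDeg A u ≤ 1
      · exact Or.inl ⟨h, hd⟩
      · exact Or.inr ⟨h, by omega⟩
    · rintro (⟨h, _⟩ | ⟨h, _⟩) <;> exact h
  have hdisj : Disjoint ({u : V | A u v} ∩ {u : V | inDeg A u ≤ 1})
      {u : V | A u v ∧ 2 ≤ inDeg A u} := by
    rw [Set.disjoint_left]
    rintro u hu1 hu2
    simp only [Set.mem_inter_iff, Set.mem_setOf_eq] at hu1 hu2
    omega
  rw [inDeg]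
  nth_rewrite 1 [hdecomp]
  exact Set.ncard_union_eq hdisj (Set.toFinite _) (Set.toFinite _)


lemma quad_bounds (n x : ℤ) (hn : 16 ≤ n) (heq : (n - 2 * x) ^ 2 = 2 * n) :
    n ≤ 4 * x ∧ 4 * x ≤ 3 * n :=
  ⟨by nlinarith, by nlinarith⟩

lemma sq_half_lt (n xr : ℝ) (h : (n - 2 * xr) ^ 2 < 2 * n) : (xr - n / 2) ^ 2 < n / 2 := by
  nlinarith

set_option maxHeartbeats 1000000

/-- Claim 2.1: if `n ≥ 16` and `D` is an `S_{2,1}`-free oriented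
graph on `n` vertices with at least `⌊(n+1)²/4⌋` arcs, then (a) every vertex has
at most one in-neighbour of in-degree ≥ 2, and (b) the set
`X = {v : d⁻(v) ≤ 1}` satisfies `n/2 - √(n/2) < |X| < n/2 + √(n/2)`. -/
theorem claim_S21 {V : Type*} [Fintype V] (A : V → V → Prop)
    (n : ℕ) (hn : 16 ≤ n) (hcard : Fintype.card V = n)
    (hori : IsOriented A) (hfree : SFree A 2)
    (harcs : (n + 1) ^ 2 / 4 ≤ arcCount A) :
    (∀ v : V, {u : V | A u v ∧ 2 ≤ inDeg A u}.ncard ≤ 1) ∧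
    ((n : ℝ) / 2 - Real.sqrt ((n : ℝ) / 2)
        < ({v : V | inDeg A v ≤ 1}.ncard : ℝ) ∧
      ({v : V | inDeg A v ≤ 1}.ncard : ℝ)
        < (n : ℝ) / 2 + Real.sqrt ((n : ℝ) / 2)) := by
  classical
  have ha : ∀ v : V, {u : V | A u v ∧ 2 ≤ inDeg A u}.ncard ≤ 1 := part_a hori hfree
  refine ⟨ha, ?_⟩
  set x : ℕ := {v : V | inDeg A v ≤ 1}.ncard with hxdef
  have hxn : x ≤ n := by
    have := Set.ncard_le_ncard (Set.subset_univ {v : V | inDeg A v ≤ 1}) Set.finite_univ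
    rwa [Set.ncard_univ, Nat.card_eq_fintype_card, hcard] at this
  -- pointwise bound on in-degrees
  have hB : ∀ v : V, inDeg A v ≤ if inDeg A v ≤ 1 then 1 else x + 1 := by
    intro v
    by_cases h : inDeg A v ≤ 1
    · simp [h]
    · simp only [h, if_false]
      rw [indeg_split A v]
      have h1 : ({u : V | A u v} ∩ {u : V | inDeg A u ≤ 1}).ncard ≤ x :=
        Set.ncard_le_ncard Set.inter_subset_right (Set.toFinite _)
      have h2 := ha v
      omega
  have hsumB : ∑ v : V, (if inDeg A v ≤ 1 then 1 else x + 1) = x * 1 + (n - x) * (x + 1) := by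
    rw [Finset.sum_ite, Finset.sum_const, Finset.sum_const, smul_eq_mul, smul_eq_mul]
    have hc1 : (Finset.univ.filter (fun v : V => inDeg A v ≤ 1)).card = x := by
      rw [hxdef, Set.ncard_eq_toFinset_card', Set.toFinset_setOf]
    have hc2 : (Finset.univ.filter (fun v : V => ¬ inDeg A v ≤ 1)).card = n - x := by
      have := Finset.card_filter_add_card_filter_not
        (s := (Finset.univ : Finset V)) (p := fun v : V => inDeg A v ≤ 1)
      rw [Finset.card_univ, hcard, hc1] at this
      omega
    rw [hc1, hc2]
  have hAle : arcCount A ≤ x * 1 + (n - x) * (x + 1) := by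
    rw [arc_sum, ← hsumB]
    exact Finset.sum_le_sum (fun v _ => hB v)
  have hle : (arcCount A : ℤ) ≤ (n : ℤ) + n * x - x ^ 2 := by
    have hc : ((x * 1 + (n - x) * (x + 1) : ℕ) : ℤ) = (n : ℤ) + n * x - x ^ 2 := by
      push_cast [Nat.cast_sub hxn]; ring
    calc (arcCount A : ℤ) ≤ ((x * 1 + (n - x) * (x + 1) : ℕ) : ℤ) := by exact_mod_cast hAle
      _ = _ := hc
  have hexp : ((n : ℤ) - 2 * x) ^ 2 = (n : ℤ) ^ 2 - 4 * (n * x) + 4 * x ^ 2 := by ring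
  have hub : ((n : ℤ) - 2 * x) ^ 2 ≤ (n : ℤ) ^ 2 + 4 * n - 4 * arcCount A := by
    rw [hexp]; linarith [hle]
  -- key strict inequality
  have hkey : ((n : ℤ) - 2 * x) ^ 2 < 2 * n := by
    rcases Nat.even_or_odd n with ⟨m, hm⟩ | ⟨m, hm⟩
    · -- n even
      have he4a : n ^ 2 + 2 * n ≤ 4 * arcCount A := by
        have e1 : (n + 1) ^ 2 = 4 * (m ^ 2 + m) + 1 := by subst hm; ring
        have e2 : n ^ 2 + 2 * n = 4 * (m ^ 2 + m) := by subst hm; ring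
        rw [e1] at harcs; rw [e2]; omega
      have he4a' : (n : ℤ) ^ 2 + 2 * n ≤ 4 * arcCount A := by exact_mod_cast he4a
      rcases lt_or_eq_of_le (show ((n : ℤ) - 2 * x) ^ 2 ≤ 2 * n by linarith) with h | heq
      · exact h
      exfalso
      -- full equality case
      have haeq : (arcCount A : ℤ) = (n : ℤ) + n * x - x ^ 2 := by
        rw [hexp] at heq; linarith [hle, heq, he4a']
      have haeqN : arcCount A = x * 1 + (n - x) * (x + 1) := by
        have hc : ((x * 1 + (n - x) * (x + 1) : ℕ) : ℤ) = (n : ℤ) + n * x - x ^ 2 := by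
          push_cast [Nat.cast_sub hxn]; ring
        exact_mod_cast haeq.trans hc.symm
      -- pointwise equality of degrees with the bound
      have hsum_eq : ∑ v : V, inDeg A v = ∑ v : V, (if inDeg A v ≤ 1 then 1 else x + 1) := by
        rw [← arc_sum, hsumB]; exact haeqN
      have hpw : ∀ v : V, inDeg A v = if inDeg A v ≤ 1 then 1 else x + 1 := fun v =>
        (Finset.sum_eq_sum_iff_of_le (fun i _ => hB i)).mp hsum_eq v (Finset.mem_univ v)
      -- bounds on x
      obtain ⟨hz1, hz2⟩ := quad_bounds (n : ℤ) (x : ℤ) (by exact_mod_cast hn) heq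
      have hx3 : 3 ≤ x := by
        have : n ≤ 4 * x := by exact_mod_cast hz1
        omega
      have hxlt : x + 1 ≤ n := by
        have : 4 * x ≤ 3 * n := by exact_mod_cast hz2
        omega
      -- structure of vertices of large in-degree
      have hstruct : ∀ v : V, ¬ inDeg A v ≤ 1 →
          (∀ u : V, inDeg A u ≤ 1 → A u v) ∧ ∃ y : V, ¬ inDeg A y ≤ 1 ∧ A y v := by
        intro v hv
        have hdeg : inDeg A v = x + 1 := by have := hpw v; simp only [hv, if_false] at this; exact this
        have hsplit := indeg_split A v
        have h1 : ({u : V | A u v} ∩ {u : V | inDeg A u ≤ 1}).ncard ≤ x :=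
          Set.ncard_le_ncard Set.inter_subset_right (Set.toFinite _)
        have h2 := ha v
        have h1' : ({u : V | A u v} ∩ {u : V | inDeg A u ≤ 1}).ncard = x := by omega
        have h2' : {u : V | A u v ∧ 2 ≤ inDeg A u}.ncard = 1 := by omega
        constructor
        · have hXeq : ({u : V | A u v} ∩ {u : V | inDeg A u ≤ 1}) = {u : V | inDeg A u ≤ 1} :=
            Set.eq_of_subset_of_ncard_le Set.inter_subset_right (by rw [h1']) (Set.toFinite _)
          intro u hu
          rw [Set.ext_iff] at hXeq
          exact ((hXeq u).mpr hu).1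
        · obtain ⟨y, hy⟩ := Set.nonempty_of_ncard_ne_zero (by omega :
            {u : V | A u v ∧ 2 ≤ inDeg A u}.ncard ≠ 0)
          simp only [Set.mem_setOf_eq] at hy
          exact ⟨y, by omega, hy.1⟩
      -- in-neighbours of small vertices are small
      have hwX : ∀ u w : V, inDeg A u ≤ 1 → A w u → inDeg A w ≤ 1 := by
        intro u w hu haw
        by_contra hw
        exact hori w u haw ((hstruct w hw).1 u hu)
      -- small vertices have an in-neighbour
      have hexu : ∀ u : V, inDeg A u ≤ 1 → ∃ w : V, A w u := by
        intro u hu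
        have hdeg : inDeg A u = 1 := by have := hpw u; simp only [hu, if_true] at this; exact this
        obtain ⟨w, hw⟩ := Set.nonempty_of_ncard_ne_zero (by rw [inDeg] at hdeg; omega :
          {w : V | A w u}.ncard ≠ 0)
        exact ⟨w, hw⟩
      -- a vertex of large in-degree exists
      have hv0 : ∃ v : V, ¬ inDeg A v ≤ 1 := by
        by_contra hc
        push_neg at hc
        have hXu : {v : V | inDeg A v ≤ 1} = Set.univ := Set.eq_univ_of_forall (fun v => hc v)
        have hxn' : x = n := by
          rw [hxdef, hXu, Set.ncard_univ, Nat.card_eq_fintype_card, hcard]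
        omega
      obtain ⟨v₀, hv₀⟩ := hv0
      obtain ⟨hfull0, y, hyY, hyv⟩ := hstruct v₀ hv₀
      obtain ⟨hfully, -⟩ := hstruct y hyY
      have hXne : ({v : V | inDeg A v ≤ 1}).ncard ≠ 0 := by rw [← hxdef]; omega
      obtain ⟨u₂, hu₂X⟩ := Set.nonempty_of_ncard_ne_zero hXne
      simp only [Set.mem_setOf_eq] at hu₂X
      obtain ⟨w₂, hw₂u₂⟩ := hexu u₂ hu₂X
      have hw₂X : inDeg A w₂ ≤ 1 := hwX u₂ w₂ hu₂X hw₂u₂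
      have hw1ex : ({v : V | inDeg A v ≤ 1} \ {u₂, w₂}).Nonempty := by
        by_contra hce
        rw [Set.not_nonempty_iff_eq_empty, Set.diff_eq_empty] at hce
        have hle2 := Set.ncard_le_ncard hce (Set.toFinite _)
        have hpair : ({u₂, w₂} : Set V).ncard ≤ 2 := by
          apply le_trans (Set.ncard_insert_le _ _)
          simp [Set.ncard_singleton]
        rw [← hxdef] at hle2
        omega
      obtain ⟨w₁, hw₁X, hw₁ne⟩ := hw1ex
      simp only [Set.mem_setOf_eq] at hw₁X
      simp only [Set.mem_insert_iff, Set.mem_singleton_iff, not_or] at hw₁ne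
      have hAw1y : A w₁ y := hfully w₁ hw₁X
      have hAu2v : A u₂ v₀ := hfull0 u₂ hu₂X
      exact hfree v₀ (copy_of hori
        (fun h => hyY (by rw [h]; exact hu₂X)) hw₁ne.2
        (fun h => hyY (by rw [h]; exact hw₂X)) (fun h => hw₁ne.1 h.symm)
        hAw1y hw₂u₂ hyv hAu2v)
    · -- n odd
      have ho4a : n ^ 2 + 2 * n + 1 ≤ 4 * arcCount A := by
        have e1 : (n + 1) ^ 2 = 4 * (m ^ 2 + 2 * m + 1) := by subst hm; ring
        have e2 : n ^ 2 + 2 * n + 1 = 4 * (m ^ 2 + 2 * m + 1) := by subst hm; ring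
        rw [e1] at harcs; rw [e2]; omega
      have ho4a' : (n : ℤ) ^ 2 + 2 * n + 1 ≤ 4 * arcCount A := by exact_mod_cast ho4a
      linarith [hub]
  -- conclude over the reals
  have hreal : ((x : ℝ) - n / 2) ^ 2 < (n : ℝ) / 2 := by
    have h0 : (((n : ℤ) - 2 * x : ℤ) : ℝ) ^ 2 < ((2 * n : ℤ) : ℝ) := by exact_mod_cast hkey
    push_cast at h0
    exact sq_half_lt _ _ h0
  have habs : |(x : ℝ) - n / 2| < Real.sqrt ((n : ℝ) / 2) := by
    have h1 : Real.sqrt (((x : ℝ) - n / 2) ^ 2) < Real.sqrt ((n : ℝ) / 2) :=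
      Real.sqrt_lt_sqrt (sq_nonneg _) hreal
    rwa [Real.sqrt_sq_eq_abs] at h1
  rw [abs_lt] at habs
  exact ⟨by linarith [habs.1], by linarith [habs.2]⟩
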